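/- arXiv:2603.22807 — 2 statements merged into one kernel-verified Lean document; each statement's English description precedes it below -/
import Mathlib

section
/- (Theorem B, negative-tilt case.) For every real λ < 0, the covariance of x and x² under the exponentially tilted Wigner semicircle measure is strictly negative: Cov_λ(x, x²) = E_λ[x³] − E_λ[x]·E_λ[x²] < 0. -/
open intervalIntegral

/-- The exponentially tilted Wigner semicircle weight on `[-1,1]`. -/
noncomputable def tiltW (lam x : ℝ) : ℝ := Real.sqrt (1 - x ^ 2) * Real.exp (lam * x)

/-- The normalization constant `Z(λ)`. -/
noncomputable def tiltZ (lam : ℝ) : ℝ := ∫ x in (-1 : ℝ)..1, tiltW lam x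

/-- The mean `E_λ[f]` under the tilted semicircle measure. -/
noncomputable def tiltE (lam : ℝ) (f : ℝ → ℝ) : ℝ :=
  (tiltZ lam)⁻¹ * ∫ x in (-1 : ℝ)..1, f x * tiltW lam x

/-- The covariance `Cov_λ(f, g)` under the tilted semicircle measure. -/
noncomputable def tiltCov (lam : ℝ) (f g : ℝ → ℝ) : ℝ :=
  tiltE lam (fun x => f x * g x) - tiltE lam f * tiltE lam g

open MeasureTheory Set

lemma tiltW_continuous (lam : ℝ) : Continuous (tiltW lam) := by
  unfold tiltW; fun_prop

lemma tiltZ_pos (lam : ℝ) : 0 < tiltZ lam := by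
  refine intervalIntegral.intervalIntegral_pos_of_pos_on
    ((tiltW_continuous lam).intervalIntegrable _ _) (fun x hx => ?_) (by norm_num)
  have h1 : 0 < 1 - x ^ 2 := by nlinarith [hx.1, hx.2]
  exact mul_pos (Real.sqrt_pos.mpr h1) (Real.exp_pos _)

/-- auxiliary: integral of nonpositive function is nonpositive -/
lemma my_integral_nonpos {f : ℝ → ℝ} {a b : ℝ} (hab : a ≤ b) (h : ∀ x, f x ≤ 0) :
    (∫ x in a..b, f x) ≤ 0 := by
  have := intervalIntegral.integral_nonneg (f := fun x => -f x) (μ := volume) hab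
    (fun u _ => neg_nonneg.mpr (h u))
  rwa [intervalIntegral.integral_neg, neg_nonneg] at this

lemma my_integral_neg_of_neg_on {f : ℝ → ℝ} {a b : ℝ} (hab : a < b)
    (hf : Continuous f) (h : ∀ x ∈ Ioo a b, f x < 0) :
    (∫ x in a..b, f x) < 0 := by
  have := intervalIntegral.intervalIntegral_pos_of_pos_on
    (f := fun x => -f x) ((hf.neg).intervalIntegrable _ _)
    (fun u hu => neg_pos.mpr (h u hu)) hab
  rw [intervalIntegral.integral_neg, neg_pos] at this
  exact this

/-- General linear combination of moments. -/
lemma integral_poly_comb (lam a b c d : ℝ) :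
    (∫ y in (-1 : ℝ)..1, (a + b * y + c * y ^ 2 + d * y ^ 3) * tiltW lam y)
      = a * tiltZ lam + b * (∫ y in (-1 : ℝ)..1, y * tiltW lam y)
        + c * (∫ y in (-1 : ℝ)..1, y ^ 2 * tiltW lam y)
        + d * (∫ y in (-1 : ℝ)..1, y ^ 3 * tiltW lam y) := by
  have hW := tiltW_continuous lam
  have h0 : IntervalIntegrable (tiltW lam) volume (-1 : ℝ) 1 := hW.intervalIntegrable _ _
  have h1 : IntervalIntegrable (fun y => y * tiltW lam y) volume (-1 : ℝ) 1 := (continuous_id.mul hW).intervalIntegrable _ _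
  have h2 : IntervalIntegrable (fun y => y ^ 2 * tiltW lam y) volume (-1 : ℝ) 1 := ((continuous_pow 2).mul hW).intervalIntegrable _ _
  have h3 : IntervalIntegrable (fun y => y ^ 3 * tiltW lam y) volume (-1 : ℝ) 1 := ((continuous_pow 3).mul hW).intervalIntegrable _ _
  have hrw : (fun y => (a + b * y + c * y ^ 2 + d * y ^ 3) * tiltW lam y)
      = fun y => (a * tiltW lam y + b * (y * tiltW lam y))
        + (c * (y ^ 2 * tiltW lam y) + d * (y ^ 3 * tiltW lam y)) :=
    funext fun y => by ring
  rw [hrw, intervalIntegral.integral_add ((h0.const_mul a).add (h1.const_mul b))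
      ((h2.const_mul c).add (h3.const_mul d)),
    intervalIntegral.integral_add (h0.const_mul a) (h1.const_mul b),
    intervalIntegral.integral_add (h2.const_mul c) (h3.const_mul d),
    intervalIntegral.integral_const_mul, intervalIntegral.integral_const_mul,
    intervalIntegral.integral_const_mul, intervalIntegral.integral_const_mul]
  unfold tiltZ
  ring

noncomputable def tF (lam x y : ℝ) : ℝ := (x - y) ^ 2 * (x + y) * (tiltW lam x * tiltW lam y)

noncomputable def tG (lam x y : ℝ) : ℝ := tF lam x y + tF lam (-x) (-y)

lemma tF_cont (lam : ℝ) : Continuous (Function.uncurry (tF lam)) := by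
  unfold tF Function.uncurry tiltW; fun_prop

lemma tG_cont (lam : ℝ) : Continuous (Function.uncurry (tG lam)) := by
  unfold tG tF Function.uncurry tiltW; fun_prop

lemma tG_eq (lam x y : ℝ) : tG lam x y =
    (x - y) ^ 2 * (Real.sqrt (1 - x ^ 2) * Real.sqrt (1 - y ^ 2)) *
      ((x + y) * (Real.exp (lam * (x + y)) - Real.exp (-(lam * (x + y))))) := by
  simp only [tG, tF, tiltW, neg_sq]
  rw [show lam * (x + y) = lam * x + lam * y by ring, Real.exp_add,
    show -(lam * x + lam * y) = lam * (-x) + lam * (-y) by ring, Real.exp_add]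
  ring

lemma skey {lam : ℝ} (hlam : lam < 0) (s : ℝ) :
    s * (Real.exp (lam * s) - Real.exp (-(lam * s))) ≤ 0 := by
  rcases lt_trichotomy s 0 with hs | hs | hs
  · have : Real.exp (-(lam * s)) < Real.exp (lam * s) :=
      Real.exp_lt_exp.mpr (by nlinarith)
    nlinarith
  · simp [hs]
  · have : Real.exp (lam * s) < Real.exp (-(lam * s)) :=
      Real.exp_lt_exp.mpr (by nlinarith)
    nlinarith

lemma skey_lt {lam : ℝ} (hlam : lam < 0) {s : ℝ} (hs : 0 < s) :
    s * (Real.exp (lam * s) - Real.exp (-(lam * s))) < 0 := by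
  have : Real.exp (lam * s) < Real.exp (-(lam * s)) :=
    Real.exp_lt_exp.mpr (by nlinarith)
  nlinarith

lemma tG_nonpos {lam : ℝ} (hlam : lam < 0) (x y : ℝ) : tG lam x y ≤ 0 := by
  rw [tG_eq]
  exact mul_nonpos_of_nonneg_of_nonpos
    (mul_nonneg (sq_nonneg _) (mul_nonneg (Real.sqrt_nonneg _) (Real.sqrt_nonneg _)))
    (skey hlam _)

lemma tG_neg {lam : ℝ} (hlam : lam < 0) {x y : ℝ} (hx : x ∈ Ioo (0 : ℝ) 1)
    (hy : y ∈ Ioo (0 : ℝ) x) : tG lam x y < 0 := by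
  rw [tG_eq]
  have hx2 : 0 < 1 - x ^ 2 := by nlinarith [hx.1, hx.2]
  have hy2 : 0 < 1 - y ^ 2 := by nlinarith [hy.1, hy.2.trans hx.2]
  refine mul_neg_of_pos_of_neg
    (mul_pos (pow_pos (sub_pos.mpr hy.2) 2)
      (mul_pos (Real.sqrt_pos.mpr hx2) (Real.sqrt_pos.mpr hy2)))
    (skey_lt hlam (by nlinarith [hx.1, hy.1]))

lemma Hfun_neg {lam : ℝ} (hlam : lam < 0) :
    (∫ x in (-1 : ℝ)..1, ∫ y in (-1 : ℝ)..1, tG lam x y) < 0 := by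
  have hHcont : Continuous (fun x => ∫ y in (-1 : ℝ)..1, tG lam x y) :=
    intervalIntegral.continuous_parametric_intervalIntegral_of_continuous' (tG_cont lam) _ _
  have hHle : ∀ x : ℝ, (∫ y in (-1 : ℝ)..1, tG lam x y) ≤ 0 := fun x =>
    my_integral_nonpos (by norm_num) (fun y => tG_nonpos hlam x y)
  have hHneg : ∀ x ∈ Ioo (0 : ℝ) 1, (∫ y in (-1 : ℝ)..1, tG lam x y) < 0 := by
    intro x hx
    have hc : Continuous (fun y => tG lam x y) := (tG_cont lam).comp (Continuous.prodMk_right x)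
    have hi : ∀ a b : ℝ, IntervalIntegrable (fun y => tG lam x y) volume a b := fun a b =>
      hc.intervalIntegrable _ _
    have e1 : (∫ y in (-1 : ℝ)..0, tG lam x y) + (∫ y in (0 : ℝ)..1, tG lam x y)
        = ∫ y in (-1 : ℝ)..1, tG lam x y :=
      intervalIntegral.integral_add_adjacent_intervals (hi _ _) (hi _ _)
    have e2 : (∫ y in (0 : ℝ)..x, tG lam x y) + (∫ y in x..1, tG lam x y)
        = ∫ y in (0 : ℝ)..1, tG lam x y :=
      intervalIntegral.integral_add_adjacent_intervals (hi _ _) (hi _ _)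
    have t1 : (∫ y in (-1 : ℝ)..0, tG lam x y) ≤ 0 :=
      my_integral_nonpos (by norm_num) (fun y => tG_nonpos hlam x y)
    have t3 : (∫ y in x..1, tG lam x y) ≤ 0 :=
      my_integral_nonpos hx.2.le (fun y => tG_nonpos hlam x y)
    have t2 : (∫ y in (0 : ℝ)..x, tG lam x y) < 0 :=
      my_integral_neg_of_neg_on hx.1 hc (fun y hy => tG_neg hlam hx hy)
    linarith
  have s1 : (∫ x in (-1 : ℝ)..0, ∫ y in (-1 : ℝ)..1, tG lam x y) ≤ 0 :=
    my_integral_nonpos (by norm_num) hHle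
  have s2 : (∫ x in (0 : ℝ)..1, ∫ y in (-1 : ℝ)..1, tG lam x y) < 0 :=
    my_integral_neg_of_neg_on (by norm_num) hHcont hHneg
  have e : (∫ x in (-1 : ℝ)..0, ∫ y in (-1 : ℝ)..1, tG lam x y)
      + (∫ x in (0 : ℝ)..1, ∫ y in (-1 : ℝ)..1, tG lam x y)
      = ∫ x in (-1 : ℝ)..1, ∫ y in (-1 : ℝ)..1, tG lam x y :=
    intervalIntegral.integral_add_adjacent_intervals (hHcont.intervalIntegrable _ _)
      (hHcont.intervalIntegrable _ _)
  linarith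

lemma double_tF_neg {lam : ℝ} (hlam : lam < 0) :
    (∫ x in (-1 : ℝ)..1, ∫ y in (-1 : ℝ)..1, tF lam x y) < 0 := by
  have hFx : ∀ x : ℝ, Continuous (fun y => tF lam x y) := fun x =>
    (tF_cont lam).comp (Continuous.prodMk_right x)
  have hFnx : ∀ x : ℝ, Continuous (fun y => tF lam (-x) (-y)) := fun x =>
    ((tF_cont lam).comp (Continuous.prodMk_right (-x))).comp continuous_neg
  have hH1 : Continuous (fun x => ∫ y in (-1 : ℝ)..1, tF lam x y) :=
    intervalIntegral.continuous_parametric_intervalIntegral_of_continuous' (tF_cont lam) _ _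
  have hH2' : Continuous (fun x => ∫ y in (-1 : ℝ)..1, tF lam x (-y)) := by
    apply intervalIntegral.continuous_parametric_intervalIntegral_of_continuous'
    exact (tF_cont lam).comp (continuous_fst.prodMk continuous_snd.neg)
  have hH2 : Continuous (fun x => ∫ y in (-1 : ℝ)..1, tF lam (-x) (-y)) :=
    hH2'.comp continuous_neg
  have hsym : (∫ x in (-1 : ℝ)..1, ∫ y in (-1 : ℝ)..1, tF lam (-x) (-y))
      = ∫ x in (-1 : ℝ)..1, ∫ y in (-1 : ℝ)..1, tF lam x y := by
    have h1 : (∫ x in (-1 : ℝ)..1, ∫ y in (-1 : ℝ)..1, tF lam (-x) (-y))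
        = ∫ x in (-1 : ℝ)..1, ∫ y in (-1 : ℝ)..1, tF lam x (-y) := by
      have := intervalIntegral.integral_comp_neg (a := (-1 : ℝ)) (b := 1)
        (f := fun x => ∫ y in (-1 : ℝ)..1, tF lam x (-y))
      simp only [neg_neg] at this
      exact this
    have h2 : ∀ x : ℝ, (∫ y in (-1 : ℝ)..1, tF lam x (-y)) = ∫ y in (-1 : ℝ)..1, tF lam x y := by
      intro x
      have := intervalIntegral.integral_comp_neg (a := (-1 : ℝ)) (b := 1)
        (f := fun y => tF lam x y)
      simp only [neg_neg] at this
      exact this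
    rw [h1]
    exact intervalIntegral.integral_congr fun x _ => h2 x
  have hGsplit : (∫ x in (-1 : ℝ)..1, ∫ y in (-1 : ℝ)..1, tG lam x y)
      = (∫ x in (-1 : ℝ)..1, ∫ y in (-1 : ℝ)..1, tF lam x y)
        + ∫ x in (-1 : ℝ)..1, ∫ y in (-1 : ℝ)..1, tF lam (-x) (-y) := by
    rw [← intervalIntegral.integral_add (hH1.intervalIntegrable _ _) (hH2.intervalIntegrable _ _)]
    refine intervalIntegral.integral_congr fun x _ => ?_
    simp only [tG]
    exact intervalIntegral.integral_add ((hFx x).intervalIntegrable _ _)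
      ((hFnx x).intervalIntegrable _ _)
  have hGneg := Hfun_neg hlam
  rw [hGsplit, hsym] at hGneg
  linarith

lemma moments_neg {lam : ℝ} (hlam : lam < 0) :
    (∫ x in (-1 : ℝ)..1, x ^ 3 * tiltW lam x) * tiltZ lam
      - (∫ x in (-1 : ℝ)..1, x * tiltW lam x) * (∫ x in (-1 : ℝ)..1, x ^ 2 * tiltW lam x) < 0 := by
  set Z := tiltZ lam with hZ
  set A := ∫ x in (-1 : ℝ)..1, x * tiltW lam x with hA
  set B := ∫ x in (-1 : ℝ)..1, x ^ 2 * tiltW lam x with hB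
  set C := ∫ x in (-1 : ℝ)..1, x ^ 3 * tiltW lam x with hC
  have hinner : ∀ x : ℝ, (∫ y in (-1 : ℝ)..1, tF lam x y)
      = tiltW lam x * (x ^ 3 * Z + -x ^ 2 * A + -x * B + 1 * C) := by
    intro x
    have e : (fun y => tF lam x y)
        = fun y => tiltW lam x * ((x ^ 3 + -x ^ 2 * y + -x * y ^ 2 + 1 * y ^ 3) * tiltW lam y) :=
      funext fun y => by unfold tF; ring
    rw [e, intervalIntegral.integral_const_mul, integral_poly_comb]
  have houter : (∫ x in (-1 : ℝ)..1, ∫ y in (-1 : ℝ)..1, tF lam x y)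
      = C * Z + -B * A + -A * B + Z * C :=
    calc (∫ x in (-1 : ℝ)..1, ∫ y in (-1 : ℝ)..1, tF lam x y)
        = ∫ x in (-1 : ℝ)..1, (C + -B * x + -A * x ^ 2 + Z * x ^ 3) * tiltW lam x :=
          intervalIntegral.integral_congr fun x _ => by rw [hinner x]; ring
      _ = C * Z + -B * A + -A * B + Z * C := integral_poly_comb lam C (-B) (-A) Z
  have := double_tF_neg hlam
  rw [houter] at this
  linarith

/-- Theorem B (negative-tilt case): for every `λ < 0`,
`Cov_λ(x, x²) < 0` under the exponentially tilted Wigner semicircle measure. -/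
theorem tiltCov_x_xsq_neg (lam : ℝ) (hlam : lam < 0) :
    tiltCov lam (fun x => x) (fun x => x ^ 2) < 0 := by
  have hZ := tiltZ_pos lam
  simp only [tiltCov, tiltE]
  have hx3 : (∫ x in (-1 : ℝ)..1, x * x ^ 2 * tiltW lam x)
      = ∫ x in (-1 : ℝ)..1, x ^ 3 * tiltW lam x :=
    intervalIntegral.integral_congr fun x _ => by ring
  rw [hx3]
  set Z := tiltZ lam
  set A := ∫ x in (-1 : ℝ)..1, x * tiltW lam x
  set B := ∫ x in (-1 : ℝ)..1, x ^ 2 * tiltW lam x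
  set C := ∫ x in (-1 : ℝ)..1, x ^ 3 * tiltW lam x
  have key : C * Z - A * B < 0 := moments_neg hlam
  have hrw : Z⁻¹ * C - Z⁻¹ * A * (Z⁻¹ * B) = (C * Z - A * B) / Z ^ 2 := by
    field_simp
  rw [hrw]
  exact div_neg_of_neg_of_pos key (by positivity)
end

section
/- (Barrier step, Step 4(b) of the proof of Theorem B.) Define R(z) = B₀(z)/(z·B₁(z)) and the barrier function φ(z) = z²·(R(z)² − 1) − 4 for z > 0. If z₀ > 0 satisfies φ(z₀) = 0, then φ is differentiable at z₀ with HasDerivAt φ (2·z₀·(Real.sqrt(1 + 4/z₀²) − 2/z₀)²) z₀; in particular the derivative of φ at any zero z₀ > 0 is strictly positive. -/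
open intervalIntegral MeasureTheory Set

lemma rpow_half_eq (t : ℝ) : (1 - t ^ 2) ^ (-(1 / 2) : ℝ) = (Real.sqrt (1 - t ^ 2))⁻¹ := by
  rcases le_or_gt 0 (1 - t ^ 2) with h | h
  · rw [Real.rpow_neg h, Real.sqrt_eq_rpow]
  · rw [Real.rpow_def_of_neg h, Real.sqrt_eq_zero_of_nonpos h.le, inv_zero]
    rw [mul_comm]
    simpa [div_eq_inv_mul] using Real.cos_pi_div_two

lemma intInt_w : IntervalIntegrable (fun t => (Real.sqrt (1 - t ^ 2))⁻¹) volume (-1 : ℝ) 1 := by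
  rw [intervalIntegrable_iff_integrableOn_Ioc_of_le (by norm_num)]
  have h := intervalIntegral.integrableOn_deriv_of_nonneg (g := Real.arcsin)
      (g' := fun t => (Real.sqrt (1 - t ^ 2))⁻¹) (a := (-1:ℝ)) (b := 1)
      (Real.continuous_arcsin.continuousOn)
      (fun x hx => by
        have := Real.hasDerivAt_arcsin (ne_of_gt hx.1) (ne_of_lt hx.2)
        simpa [one_div] using this)
      (fun x hx => by positivity)
  exact h

lemma meas_w : Measurable (fun t : ℝ => (Real.sqrt (1 - t ^ 2))⁻¹) :=
  (Real.continuous_sqrt.comp (by continuity)).measurable.inv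

lemma intInt_mul {f : ℝ → ℝ} (hf : Continuous f) :
    IntervalIntegrable (fun t => f t * (Real.sqrt (1 - t ^ 2))⁻¹) volume (-1 : ℝ) 1 := by
  rw [intervalIntegrable_iff_integrableOn_Ioc_of_le (by norm_num)]
  obtain ⟨C, hC⟩ := (isCompact_Icc (a := (-1:ℝ)) (b := 1)).exists_bound_of_continuousOn
    hf.continuousOn
  have hCnn : 0 ≤ C := le_trans (norm_nonneg _) (hC 0 (by norm_num))
  have hbd : IntegrableOn (fun t => C * (Real.sqrt (1 - t ^ 2))⁻¹) (Ioc (-1 : ℝ) 1) volume := by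
    have := intInt_w
    rw [intervalIntegrable_iff_integrableOn_Ioc_of_le (by norm_num)] at this
    exact this.const_mul C
  refine hbd.integrable.mono' ((hf.measurable.mul meas_w).aestronglyMeasurable) ?_
  filter_upwards [ae_restrict_mem measurableSet_Ioc] with t ht
  have hw : (0:ℝ) ≤ (Real.sqrt (1 - t ^ 2))⁻¹ := by positivity
  have : |f t| ≤ C := hC t ⟨ht.1.le, ht.2⟩
  calc ‖f t * (Real.sqrt (1 - t ^ 2))⁻¹‖ = |f t| * (Real.sqrt (1 - t ^ 2))⁻¹ := by
        rw [norm_mul, Real.norm_eq_abs, Real.norm_eq_abs, abs_of_nonneg hw]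
      _ ≤ C * (Real.sqrt (1 - t ^ 2))⁻¹ := by gcongr

/-- `B₀(z) = ∫_{−1}^{1} e^{zt} (1 − t²)^{−1/2} dt`, so that `I₀(z) = B₀(z)/π`. -/
noncomputable def B0 (z : ℝ) : ℝ :=
  ∫ t in (-1 : ℝ)..1, Real.exp (z * t) * (1 - t ^ 2) ^ (-(1 / 2) : ℝ)

/-- `B₁(z) = ∫_{−1}^{1} e^{zt} √(1 − t²) dt`, so that `I₁(z) = z·B₁(z)/π`. -/
noncomputable def B1 (z : ℝ) : ℝ :=
  ∫ t in (-1 : ℝ)..1, Real.exp (z * t) * Real.sqrt (1 - t ^ 2)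

lemma B0_eq (z : ℝ) :
    B0 z = ∫ t in (-1 : ℝ)..1, Real.exp (z * t) * (Real.sqrt (1 - t ^ 2))⁻¹ := by
  unfold B0; simp only [rpow_half_eq]

lemma B0_pos (z : ℝ) : 0 < B0 z := by
  rw [B0_eq]
  refine intervalIntegral.intervalIntegral_pos_of_pos_on (intInt_mul (by continuity)) ?_ (by norm_num)
  intro x hx
  have h1 : 0 < 1 - x ^ 2 := by nlinarith [hx.1, hx.2]
  have := Real.sqrt_pos.2 h1
  positivity

lemma B1_pos (z : ℝ) : 0 < B1 z := by
  refine intervalIntegral.intervalIntegral_pos_of_pos_on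
    ((Continuous.mul (by continuity) (Real.continuous_sqrt.comp (by continuity))).intervalIntegrable _ _)
    ?_ (by norm_num)
  intro x hx
  have h1 : 0 < 1 - x ^ 2 := by nlinarith [hx.1, hx.2]
  have := Real.sqrt_pos.2 h1
  positivity

lemma exp_bound_aux {z x t : ℝ} (ht : t ∈ Set.uIoc (-1 : ℝ) 1) (hx : x ∈ Metric.ball z 1) :
    Real.exp (x * t) ≤ Real.exp (|z| + 1) := by
  rw [Set.uIoc_of_le (by norm_num)] at ht
  have ht' : |t| ≤ 1 := abs_le.2 ⟨ht.1.le, ht.2⟩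
  have hx' : |x| ≤ |z| + 1 := by
    have := mem_ball_iff_norm.1 hx
    calc |x| = |(x - z) + z| := by ring_nf
      _ ≤ |x - z| + |z| := abs_add_le _ _
      _ ≤ |z| + 1 := by rw [← Real.norm_eq_abs (x - z)]; linarith
  have : x * t ≤ |z| + 1 := by
    calc x * t ≤ |x * t| := le_abs_self _
      _ = |x| * |t| := abs_mul _ _
      _ ≤ (|z| + 1) * 1 := by
          apply mul_le_mul hx' ht' (abs_nonneg _) (by positivity)
      _ = |z| + 1 := mul_one _
  exact Real.exp_le_exp.2 this

lemma hasDerivAt_B0 (z : ℝ) :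
    HasDerivAt B0 (∫ t in (-1 : ℝ)..1, t * Real.exp (z * t) * (Real.sqrt (1 - t ^ 2))⁻¹) z := by
  have key := intervalIntegral.hasDerivAt_integral_of_dominated_loc_of_deriv_le
    (μ := volume) (a := (-1 : ℝ)) (b := 1) (x₀ := z) (s := Metric.ball z 1)
    (F := fun x t => Real.exp (x * t) * (Real.sqrt (1 - t ^ 2))⁻¹)
    (F' := fun x t => t * Real.exp (x * t) * (Real.sqrt (1 - t ^ 2))⁻¹)
    (bound := fun t => Real.exp (|z| + 1) * (Real.sqrt (1 - t ^ 2))⁻¹)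
    (Metric.ball_mem_nhds z one_pos)
    (Filter.Eventually.of_forall fun x =>
      (((Real.continuous_exp.comp (by continuity)).measurable.mul meas_w)).aestronglyMeasurable)
    (intInt_mul (by continuity))
    ((((by continuity : Continuous fun t : ℝ => t * Real.exp (z * t))).measurable.mul
      meas_w).aestronglyMeasurable)
    (Filter.Eventually.of_forall fun t ht x hx => ?_)
    (intInt_mul (by continuity))
    (Filter.Eventually.of_forall fun t ht x hx => ?_)
  · have hfun : B0 = fun x => ∫ t in (-1 : ℝ)..1,
        Real.exp (x * t) * (Real.sqrt (1 - t ^ 2))⁻¹ := funext B0_eq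
    rw [hfun]
    exact key.2
  · -- bound
    have hw : (0:ℝ) ≤ (Real.sqrt (1 - t ^ 2))⁻¹ := by positivity
    have ht' : |t| ≤ 1 := by
      rw [Set.uIoc_of_le (by norm_num)] at ht
      exact abs_le.2 ⟨ht.1.le, ht.2⟩
    have he := exp_bound_aux ht hx
    calc ‖t * Real.exp (x * t) * (Real.sqrt (1 - t ^ 2))⁻¹‖
        = |t| * Real.exp (x * t) * (Real.sqrt (1 - t ^ 2))⁻¹ := by
          rw [Real.norm_eq_abs, abs_mul, abs_mul, abs_of_nonneg (Real.exp_pos _).le,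
            abs_of_nonneg hw]
      _ ≤ 1 * Real.exp (|z| + 1) * (Real.sqrt (1 - t ^ 2))⁻¹ := by
          gcongr
      _ = Real.exp (|z| + 1) * (Real.sqrt (1 - t ^ 2))⁻¹ := by ring
  · -- differentiability
    have h1 : HasDerivAt (fun x : ℝ => Real.exp (x * t)) (Real.exp (x * t) * t) x :=
      (hasDerivAt_mul_const t).exp
    have := h1.mul_const (Real.sqrt (1 - t ^ 2))⁻¹
    refine this.congr_deriv ?_
    ring

lemma hasDerivAt_B1 (z : ℝ) :
    HasDerivAt B1 (∫ t in (-1 : ℝ)..1, t * Real.exp (z * t) * Real.sqrt (1 - t ^ 2)) z := by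
  have key := intervalIntegral.hasDerivAt_integral_of_dominated_loc_of_deriv_le
    (μ := volume) (a := (-1 : ℝ)) (b := 1) (x₀ := z) (s := Metric.ball z 1)
    (F := fun x t => Real.exp (x * t) * Real.sqrt (1 - t ^ 2))
    (F' := fun x t => t * Real.exp (x * t) * Real.sqrt (1 - t ^ 2))
    (bound := fun _ => Real.exp (|z| + 1))
    (Metric.ball_mem_nhds z one_pos)
    (Filter.Eventually.of_forall fun x =>
      ((by continuity : Continuous fun t : ℝ =>
        Real.exp (x * t) * Real.sqrt (1 - t ^ 2))).aestronglyMeasurable)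
    (((by continuity : Continuous fun t : ℝ =>
        Real.exp (z * t) * Real.sqrt (1 - t ^ 2))).intervalIntegrable _ _)
    (((by continuity : Continuous fun t : ℝ =>
        t * Real.exp (z * t) * Real.sqrt (1 - t ^ 2))).aestronglyMeasurable)
    (Filter.Eventually.of_forall fun t ht x hx => ?_)
    (intervalIntegrable_const)
    (Filter.Eventually.of_forall fun t ht x hx => ?_)
  · exact key.2
  · have ht' : |t| ≤ 1 := by
      rw [Set.uIoc_of_le (by norm_num)] at ht
      exact abs_le.2 ⟨ht.1.le, ht.2⟩
    have hs : Real.sqrt (1 - t ^ 2) ≤ 1 := by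
      have h2 : Real.sqrt (1 - t ^ 2) ≤ Real.sqrt 1 :=
        Real.sqrt_le_sqrt (by nlinarith [abs_le.1 ht'])
      simpa using h2
    have hs0 : (0:ℝ) ≤ Real.sqrt (1 - t ^ 2) := Real.sqrt_nonneg _
    have he := exp_bound_aux ht hx
    calc ‖t * Real.exp (x * t) * Real.sqrt (1 - t ^ 2)‖
        = |t| * Real.exp (x * t) * Real.sqrt (1 - t ^ 2) := by
          rw [Real.norm_eq_abs, abs_mul, abs_mul, abs_of_nonneg (Real.exp_pos _).le,
            abs_of_nonneg hs0]
      _ ≤ 1 * Real.exp (|z| + 1) * 1 := by gcongr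
      _ = Real.exp (|z| + 1) := by ring
  · have h1 : HasDerivAt (fun x : ℝ => Real.exp (x * t)) (Real.exp (x * t) * t) x :=
      (hasDerivAt_mul_const t).exp
    have := h1.mul_const (Real.sqrt (1 - t ^ 2))
    refine this.congr_deriv ?_
    ring

lemma sqrt_deriv {t : ℝ} (h1 : 0 < 1 - t ^ 2) :
    HasDerivAt (fun t : ℝ => Real.sqrt (1 - t ^ 2))
      (-t * (Real.sqrt (1 - t ^ 2))⁻¹) t := by
  have hu : HasDerivAt (fun t : ℝ => 1 - t ^ 2) (-(2 * t ^ 1)) t :=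
    (hasDerivAt_pow 2 t).const_sub 1
  have hs := (Real.hasDerivAt_sqrt (ne_of_gt h1)).comp t hu
  have hspos : 0 < Real.sqrt (1 - t ^ 2) := Real.sqrt_pos.2 h1
  refine hs.congr_deriv ?_
  field_simp

lemma hexp_deriv (z t : ℝ) :
    HasDerivAt (fun t : ℝ => Real.exp (z * t)) (Real.exp (z * t) * z) t := by
  have := ((hasDerivAt_id t).const_mul z).exp
  simpa using this

lemma key1 (z : ℝ) :
    ∫ t in (-1 : ℝ)..1, t * Real.exp (z * t) * (Real.sqrt (1 - t ^ 2))⁻¹ = z * B1 z := by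
  have hint1 : IntervalIntegrable
      (fun t => z * (Real.exp (z * t) * Real.sqrt (1 - t ^ 2))) volume (-1 : ℝ) 1 :=
    ((by continuity : Continuous fun t : ℝ =>
      z * (Real.exp (z * t) * Real.sqrt (1 - t ^ 2)))).intervalIntegrable _ _
  have hint2 : IntervalIntegrable
      (fun t => t * Real.exp (z * t) * (Real.sqrt (1 - t ^ 2))⁻¹) volume (-1 : ℝ) 1 := by
    have := intInt_mul (f := fun t => t * Real.exp (z * t)) (by continuity)
    simpa [mul_assoc] using this
  have hftc : ∫ t in (-1 : ℝ)..1,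
      (z * (Real.exp (z * t) * Real.sqrt (1 - t ^ 2))
        - t * Real.exp (z * t) * (Real.sqrt (1 - t ^ 2))⁻¹) = 0 := by
    rw [intervalIntegral.integral_eq_sub_of_hasDerivAt_of_le (by norm_num)
      (f := fun t => Real.exp (z * t) * Real.sqrt (1 - t ^ 2))
      (by continuity : Continuous fun t : ℝ =>
        Real.exp (z * t) * Real.sqrt (1 - t ^ 2)).continuousOn
      (fun t ht => ?_) (hint1.sub hint2)]
    · norm_num [Real.sqrt_eq_zero_of_nonpos]
    · have h1 : 0 < 1 - t ^ 2 := by nlinarith [ht.1, ht.2]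
      have := (hexp_deriv z t).mul (sqrt_deriv h1)
      refine this.congr_deriv ?_
      ring
  rw [intervalIntegral.integral_sub hint1 hint2, intervalIntegral.integral_const_mul] at hftc
  unfold B1
  linarith

lemma key2 (z : ℝ) :
    z * ∫ t in (-1 : ℝ)..1, t * Real.exp (z * t) * Real.sqrt (1 - t ^ 2)
      = B0 z - 2 * B1 z := by
  have hint1 : IntervalIntegrable
      (fun t => 2 * (Real.exp (z * t) * Real.sqrt (1 - t ^ 2))
        + z * (t * Real.exp (z * t) * Real.sqrt (1 - t ^ 2))) volume (-1 : ℝ) 1 :=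
    (by continuity : Continuous fun t : ℝ =>
      2 * (Real.exp (z * t) * Real.sqrt (1 - t ^ 2))
        + z * (t * Real.exp (z * t) * Real.sqrt (1 - t ^ 2))).intervalIntegrable _ _
  have hint2 : IntervalIntegrable
      (fun t => Real.exp (z * t) * (Real.sqrt (1 - t ^ 2))⁻¹) volume (-1 : ℝ) 1 :=
    intInt_mul (by continuity)
  have hftc : ∫ t in (-1 : ℝ)..1,
      ((2 * (Real.exp (z * t) * Real.sqrt (1 - t ^ 2))
        + z * (t * Real.exp (z * t) * Real.sqrt (1 - t ^ 2)))
        - Real.exp (z * t) * (Real.sqrt (1 - t ^ 2))⁻¹) = 0 := by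
    rw [intervalIntegral.integral_eq_sub_of_hasDerivAt_of_le (by norm_num)
      (f := fun t => t * Real.exp (z * t) * Real.sqrt (1 - t ^ 2))
      (by continuity : Continuous fun t : ℝ =>
        t * Real.exp (z * t) * Real.sqrt (1 - t ^ 2)).continuousOn
      (fun t ht => ?_) (hint1.sub hint2)]
    · norm_num [Real.sqrt_eq_zero_of_nonpos]
    · have h1 : 0 < 1 - t ^ 2 := by nlinarith [ht.1, ht.2]
      have hspos : 0 < Real.sqrt (1 - t ^ 2) := Real.sqrt_pos.2 h1
      have hsq : Real.sqrt (1 - t ^ 2) ^ 2 = 1 - t ^ 2 := Real.sq_sqrt h1.le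
      have hd := ((hasDerivAt_id t).mul (hexp_deriv z t)).mul (sqrt_deriv h1)
      refine hd.congr_deriv ?_
      simp only [Pi.mul_apply, id]
      field_simp
      ring_nf
      nlinarith [hsq, Real.exp_pos (z * t)]
  rw [intervalIntegral.integral_sub hint1 hint2,
    intervalIntegral.integral_add
      ((by continuity : Continuous fun t : ℝ =>
        2 * (Real.exp (z * t) * Real.sqrt (1 - t ^ 2))).intervalIntegrable _ _)
      ((by continuity : Continuous fun t : ℝ =>
        z * (t * Real.exp (z * t) * Real.sqrt (1 - t ^ 2))).intervalIntegrable _ _),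
    intervalIntegral.integral_const_mul, intervalIntegral.integral_const_mul] at hftc
  have hB0 := B0_eq z
  unfold B1 at *
  linarith

/-- The Bessel ratio `R(z) = B₀(z)/(z·B₁(z)) = I₀(z)/I₁(z)`. -/
noncomputable def Rb (z : ℝ) : ℝ := B0 z / (z * B1 z)

/-- The barrier function `φ(z) = z²·(R(z)² − 1) − 4`. -/
noncomputable def phiB (z : ℝ) : ℝ := z ^ 2 * ((Rb z) ^ 2 - 1) - 4

/-- Barrier step: at any zero `z₀ > 0` of `φ`, the barrier function is
differentiable with derivative `2·z₀·(√(1 + 4/z₀²) − 2/z₀)²`, which is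
strictly positive. -/
theorem hasDerivAt_phiB_at_zero (z₀ : ℝ) (hz₀ : 0 < z₀) (hzero : phiB z₀ = 0) :
    HasDerivAt phiB (2 * z₀ * (Real.sqrt (1 + 4 / z₀ ^ 2) - 2 / z₀) ^ 2) z₀ ∧
      0 < 2 * z₀ * (Real.sqrt (1 + 4 / z₀ ^ 2) - 2 / z₀) ^ 2 := by
  have hb0 : 0 < B0 z₀ := B0_pos z₀
  have hb1 : 0 < B1 z₀ := B1_pos z₀
  have hzne : z₀ ≠ 0 := ne_of_gt hz₀
  have hb1ne : B1 z₀ ≠ 0 := ne_of_gt hb1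
  have hden : z₀ * B1 z₀ ≠ 0 := by positivity
  -- derivative of B0
  have hD0 : HasDerivAt B0 (z₀ * B1 z₀) z₀ := by
    have := hasDerivAt_B0 z₀
    rwa [key1] at this
  -- derivative of z * B1 z
  have hZB1 : HasDerivAt (fun z : ℝ => z * B1 z) (B0 z₀ - B1 z₀) z₀ := by
    have h := (hasDerivAt_id z₀).mul (hasDerivAt_B1 z₀)
    have h2 := key2 z₀
    refine h.congr_deriv ?_
    simp only [id]
    linarith
  -- derivative of Rb
  have hRb : HasDerivAt Rb
      ((z₀ * B1 z₀ * (z₀ * B1 z₀) - B0 z₀ * (B0 z₀ - B1 z₀)) / (z₀ * B1 z₀) ^ 2) z₀ := by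
    unfold Rb
    exact hD0.div hZB1 hden
  -- derivative of phiB
  have hphi : HasDerivAt phiB
      ((2 : ℕ) * z₀ ^ 1 * ((Rb z₀) ^ 2 - 1)
        + z₀ ^ 2 * (2 * Rb z₀ ^ 1 *
          ((z₀ * B1 z₀ * (z₀ * B1 z₀) - B0 z₀ * (B0 z₀ - B1 z₀)) / (z₀ * B1 z₀) ^ 2))) z₀ := by
    unfold phiB
    exact ((hasDerivAt_pow 2 z₀).mul ((hRb.pow 2).sub_const 1)).sub_const 4
  -- algebraic facts
  set R : ℝ := Rb z₀ with hRdef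
  have hRpos : 0 < R := by
    rw [hRdef]; unfold Rb; positivity
  have hR2 : R ^ 2 = 1 + 4 / z₀ ^ 2 := by
    unfold phiB at hzero
    rw [← hRdef] at hzero
    field_simp at hzero ⊢
    linarith
  have hsqrt : Real.sqrt (1 + 4 / z₀ ^ 2) = R := by
    rw [← hR2, Real.sqrt_sq hRpos.le]
  have hV : (z₀ * B1 z₀ * (z₀ * B1 z₀) - B0 z₀ * (B0 z₀ - B1 z₀)) / (z₀ * B1 z₀) ^ 2
      = 1 - R ^ 2 + R / z₀ := by
    rw [hRdef]; unfold Rb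
    field_simp
    ring
  have hmain : (2 : ℕ) * z₀ ^ 1 * (R ^ 2 - 1)
      + z₀ ^ 2 * (2 * R ^ 1 * (1 - R ^ 2 + R / z₀))
      = 2 * z₀ * (Real.sqrt (1 + 4 / z₀ ^ 2) - 2 / z₀) ^ 2 := by
    have hR2' : z₀ ^ 2 * R ^ 2 = z₀ ^ 2 + 4 := by
      field_simp at hR2
      linarith
    rw [hsqrt]
    field_simp
    linear_combination (2 - 2 * z₀ * R) * hR2'
  constructor
  · rw [← hmain]
    rw [hV] at hphi
    exact hphi
  · rw [hsqrt]
    have hRne : R - 2 / z₀ ≠ 0 := by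
      intro h
      have : R = 2 / z₀ := by linarith
      rw [this] at hR2
      field_simp at hR2
      nlinarith
    positivity
end
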